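/- Consider 2×2 matrices over Ẑ: suppose D₀ = [[λ₀, ρ₀],[0, μ₀]] and D₁ = [[λ₁, ρ₁],[0, μ₁]] are upper-triangular with λᵢ, μᵢ ∈ Ẑ^×, and A = [[α, β],[γ, δ]], A' = [[α', β'],[γ', δ']] are matrices in GL(2,ℤ) with γ ≠ 0 and γ' ≠ 0, satisfying D₁·A = A'·D₀. Then γ' = ±γ, μ₁ = ±λ₀, and λ₁ = ±μ₀. -/

import Mathlib

/-- The profinite completion of `ℤ`, as the subring of compatible families in the
product of all the finite cyclic rings `ℤ/n`. -/
def ZHatSubring : Subring (∀ n : ℕ+, ZMod (n : ℕ)) where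
  carrier := {x | ∀ (m k : ℕ+) (h : (m : ℕ) ∣ (k : ℕ)),
    ZMod.castHom h (ZMod (m : ℕ)) (x k) = x m}
  zero_mem' := by intro m k h; simp
  one_mem' := by intro m k h; simp only [Pi.one_apply, map_one]
  add_mem' := fun {a b} ha hb => by
    intro m k h
    simp only [Pi.add_apply, map_add, ha m k h, hb m k h]
  mul_mem' := fun {a b} ha hb => by
    intro m k h
    simp only [Pi.mul_apply, map_mul, ha m k h, hb m k h]
  neg_mem' := fun {a} ha => by
    intro m k h
    simp only [Pi.neg_apply, map_neg, ha m k h]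

/-- The ring `Ẑ` of profinite integers. -/
abbrev ZHat : Type := ↥ZHatSubring

open Matrix

def ZHatEv (k : ℕ+) : ZHat →+* ZMod (k : ℕ) :=
  (Pi.evalRingHom (fun n : ℕ+ => ZMod (n : ℕ)) k).comp ZHatSubring.subtype

lemma ZHat_int_regular {n : ℤ} (hn : n ≠ 0) {x : ZHat} (h : (n : ZHat) * x = 0) : x = 0 := by
  set N := n.natAbs with hNdef
  have hNpos : 0 < N := Int.natAbs_pos.mpr hn
  have hN : ((N : ℤ) : ZHat) * x = 0 := by
    rcases Int.natAbs_eq n with he | he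
    · rw [← he]; exact h
    · have : ((N : ℤ) : ZHat) = -(n : ZHat) := by
        rw [show ((N:ℤ) : ZHat) = -(((-(N:ℤ)) : ℤ) : ZHat) by push_cast; ring, ← he]
      rw [this, neg_mul, h, neg_zero]
  have hx : ∀ k : ℕ+, (N : ZMod (k : ℕ)) * x.1 k = 0 := by
    intro k
    have := congrArg (ZHatEv k) hN
    rw [_root_.map_mul, map_intCast, map_zero] at this
    push_cast at this
    exact this
  apply Subtype.ext
  rw [ZeroMemClass.coe_zero]
  funext m
  set k : ℕ+ := m * ⟨N, hNpos⟩ with hkdef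
  have hdvd : (m : ℕ) ∣ (k : ℕ) := by
    rw [hkdef]; exact dvd_mul_right (m : ℕ) N
  have hk := x.2 m k hdvd
  haveI : NeZero (k : ℕ) := ⟨k.pos.ne'⟩
  haveI : NeZero (m : ℕ) := ⟨m.pos.ne'⟩
  set y := (x.1 k).val with hydef
  have hval : (y : ZMod (k : ℕ)) = x.1 k := ZMod.natCast_rightInverse _
  have h1 : ((N * y : ℕ) : ZMod (k : ℕ)) = 0 := by
    push_cast
    rw [hval]; exact hx k
  have h2 : (k : ℕ) ∣ N * y := (ZMod.natCast_eq_zero_iff _ _).mp h1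
  have h3 : (m : ℕ) ∣ y := by
    rw [hkdef] at h2
    change (m : ℕ) * N ∣ N * y at h2
    have : (m : ℕ) * N ∣ y * N := by rwa [mul_comm N y] at h2
    exact (mul_dvd_mul_iff_right hNpos.ne').mp this
  have : x.1 m = ((y : ℕ) : ZMod (m : ℕ)) := by
    rw [← hk, ← hval, map_natCast]
  rw [this, Pi.zero_apply]
  exact (ZMod.natCast_eq_zero_iff _ _).mpr h3

lemma ZHat_int_dvd {n m : ℤ} (hn : n ≠ 0) (c : ZHat) (h : (m : ZHat) = (n : ZHat) * c) :
    n ∣ m := by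
  have hNpos : 0 < n.natAbs := Int.natAbs_pos.mpr hn
  set k : ℕ+ := ⟨n.natAbs, hNpos⟩ with hkdef
  have h1 := congrArg (ZHatEv k) h
  rw [_root_.map_mul, map_intCast, map_intCast] at h1
  have hzero : ((n : ℤ) : ZMod (k : ℕ)) = 0 := by
    rw [ZMod.intCast_zmod_eq_zero_iff_dvd]
    exact Int.natAbs_dvd.mpr dvd_rfl
  rw [hzero, zero_mul] at h1
  have h2 : ((n.natAbs : ℕ) : ℤ) ∣ m := by
    rwa [← ZMod.intCast_zmod_eq_zero_iff_dvd]
  exact Int.natAbs_dvd.mp h2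


/-- if upper-triangular matrices `D₀, D₁` over `Ẑ` with unit diagonal
entries satisfy `D₁·A = A'·D₀` for matrices `A, A' ∈ GL(2,ℤ)` with nonzero lower-left
entries `γ, γ'`, then `γ' = ±γ`, `μ₁ = ±λ₀` and `λ₁ = ±μ₀`. -/
theorem triangular_compatibility
    (lam0 mu0 lam1 mu1 : ZHatˣ) (rho0 rho1 : ZHat)
    (A A' : Matrix (Fin 2) (Fin 2) ℤ) (hA : IsUnit A.det) (hA' : IsUnit A'.det)
    (hγ : A 1 0 ≠ 0) (hγ' : A' 1 0 ≠ 0)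
    (h : (!![(lam1 : ZHat), rho1; 0, (mu1 : ZHat)]) * (A.map (Int.cast : ℤ → ZHat)) =
         (A'.map (Int.cast : ℤ → ZHat)) * (!![(lam0 : ZHat), rho0; 0, (mu0 : ZHat)])) :
    (A' 1 0 = A 1 0 ∨ A' 1 0 = -(A 1 0)) ∧
    ((mu1 : ZHat) = (lam0 : ZHat) ∨ (mu1 : ZHat) = -(lam0 : ZHat)) ∧
    ((lam1 : ZHat) = (mu0 : ZHat) ∨ (lam1 : ZHat) = -(mu0 : ZHat)) := by
  -- entry (1,0)
  have h10 : (mu1 : ZHat) * ((A 1 0 : ℤ) : ZHat) = ((A' 1 0 : ℤ) : ZHat) * lam0 := by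
    have h' : ((!![(lam1 : ZHat), rho1; 0, (mu1 : ZHat)]) * (A.map (Int.cast : ℤ → ZHat))) 1 0 =
        ((A'.map (Int.cast : ℤ → ZHat)) * (!![(lam0 : ZHat), rho0; 0, (mu0 : ZHat)])) 1 0 := by
      rw [h]
    simp only [Matrix.mul_apply, Fin.sum_univ_two, Matrix.map_apply, Fin.isValue,
      Matrix.of_apply, Matrix.cons_val', Matrix.cons_val_zero, Matrix.empty_val',
      Matrix.cons_val_fin_one, Matrix.cons_val_one, Matrix.head_fin_const, Matrix.head_cons,
      zero_mul, mul_zero, add_zero, zero_add] at h'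
    exact h'
  -- determinants
  have hdet : (lam1 : ZHat) * (mu1 : ZHat) * ((A.det : ℤ) : ZHat) =
      ((A'.det : ℤ) : ZHat) * ((lam0 : ZHat) * (mu0 : ZHat)) := by
    have h' := congrArg Matrix.det h
    rw [Matrix.det_mul, Matrix.det_mul, Matrix.det_fin_two_of, Matrix.det_fin_two_of] at h'
    simp only [Matrix.det_fin_two, Matrix.map_apply] at h'
    rw [Matrix.det_fin_two A, Matrix.det_fin_two A']
    push_cast at h' ⊢
    linear_combination h'
  have e0 : (lam0 : ZHat) * ((lam0⁻¹ : ZHatˣ) : ZHat) = 1 := Units.mul_inv lam0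
  have e0' : (mu1 : ZHat) * ((mu1⁻¹ : ZHatˣ) : ZHat) = 1 := Units.mul_inv mu1
  -- γ' = ±γ
  have hdvd1 : A 1 0 ∣ A' 1 0 := by
    apply ZHat_int_dvd hγ (((mu1 * lam0⁻¹ : ZHatˣ) : ZHat))
    push_cast
    linear_combination (-(((lam0⁻¹ : ZHatˣ) : ZHat))) * h10 - ((A' 1 0 : ℤ) : ZHat) * e0
  have hdvd2 : A' 1 0 ∣ A 1 0 := by
    apply ZHat_int_dvd hγ' (((lam0 * mu1⁻¹ : ZHatˣ) : ZHat))
    push_cast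
    linear_combination (((mu1⁻¹ : ZHatˣ) : ZHat)) * h10 - ((A 1 0 : ℤ) : ZHat) * e0'
  have hgg : A' 1 0 = A 1 0 ∨ A' 1 0 = -(A 1 0) := by
    have := Int.associated_iff.mp (associated_of_dvd_dvd hdvd1 hdvd2)
    omega
  -- mu1 = ± lam0
  have hmu : (mu1 : ZHat) = (lam0 : ZHat) ∨ (mu1 : ZHat) = -(lam0 : ZHat) := by
    rcases hgg with hg | hg
    · left
      rw [hg] at h10
      have hz : ((A 1 0 : ℤ) : ZHat) * ((mu1 : ZHat) - (lam0 : ZHat)) = 0 := by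
        linear_combination h10
      exact sub_eq_zero.mp (ZHat_int_regular hγ hz)
    · right
      rw [hg] at h10
      push_cast at h10
      have hz : ((A 1 0 : ℤ) : ZHat) * ((mu1 : ZHat) + (lam0 : ZHat)) = 0 := by
        linear_combination h10
      have := ZHat_int_regular hγ hz
      linear_combination this
  refine ⟨hgg, hmu, ?_⟩
  have he := Int.isUnit_iff.mp hA
  have he' := Int.isUnit_iff.mp hA'
  rcases hmu with h2 | h2 <;> rcases he with e1 | e1 <;> rcases he' with e1' | e1' <;>
    rw [e1, e1', h2] at hdet <;> push_cast at hdet <;>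
    first
      | (left; exact (Units.mul_right_inj lam0).mp (by linear_combination hdet))
      | (right; exact (Units.mul_right_inj lam0).mp (by linear_combination hdet))
      | (left; exact (Units.mul_right_inj lam0).mp (by linear_combination -hdet))
      | (right; exact (Units.mul_right_inj lam0).mp (by linear_combination -hdet))
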